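/- Let a ⊆ K[T_1,...,T_r] be an ideal and γ_0 a face of the orthant γ = Q_{≥0}^r. Then V(T^r_{γ_0}; a) ≠ ∅ (i.e. γ_0 is an a-face) if and only if the monomial ∏_{e_i ∈ γ_0} T_i does not lie in the radical of the ideal a_{γ_0} = ⟨ f_{γ_0} : f ∈ a ⟩ ⊆ K[T_{γ_0}]. -/

import Mathlib

attribute [local instance] Classical.propDecidable

/-- A convex cone in `ℚ^r`. -/
def IsCone {r : ℕ} (σ : Set (Fin r → ℚ)) : Prop :=
  (0 : Fin r → ℚ) ∈ σ ∧ (∀ x ∈ σ, ∀ y ∈ σ, x + y ∈ σ) ∧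
    ∀ c : ℚ, 0 ≤ c → ∀ x ∈ σ, c • x ∈ σ

/-- `τ` is a face of `σ`. -/
def IsFaceOf {r : ℕ} (τ σ : Set (Fin r → ℚ)) : Prop :=
  τ ⊆ σ ∧ ∀ x ∈ σ, ∀ y ∈ σ, x + y ∈ τ → x ∈ τ ∧ y ∈ τ

lemma gitfan_comp_aux {K : Type*} [Field K] {r : ℕ} (P : Fin r → Prop)
    [DecidablePred P] (x : Fin r → K) (f : MvPolynomial (Fin r) K) :
    MvPolynomial.eval x
        ((MvPolynomial.aeval fun i : Fin r =>
          if P i then MvPolynomial.X i else (0 : MvPolynomial (Fin r) K)) f) =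
      MvPolynomial.eval (fun i => if P i then x i else 0) f := by
  induction f using MvPolynomial.induction_on with
  | C a => simp
  | add p q hp hq => simp only [map_add, hp, hq]
  | mul_X p i hp =>
    rw [map_mul, map_mul, hp, MvPolynomial.aeval_X]
    by_cases h : P i <;> simp [h]

/-- Let `a ⊆ K[T_1,…,T_r]` be an ideal and `γ₀` a face of the
orthant `γ = ℚ_{≥0}^r`.  Then `V(T^r_{γ₀}; a) ≠ ∅` (i.e. `γ₀` is an `a`-face:
the zero set of `a` meets the torus orbit of points whose `i`-th coordinate is
nonzero exactly when `e_i ∈ γ₀`) if and only if the monomial `∏_{e_i ∈ γ₀} T_i`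
does not lie in the radical of the ideal `a_{γ₀} = ⟨ f_{γ₀} : f ∈ a ⟩`, where
`f_{γ₀}` substitutes `0` for each variable `T_i` with `e_i ∉ γ₀`. -/
theorem gitfan_stmt4 {K : Type*} [Field K] [IsAlgClosed K] [CharZero K] {r : ℕ}
    (a : Ideal (MvPolynomial (Fin r) K)) (γ0 : Set (Fin r → ℚ))
    (hγ0 : IsCone γ0 ∧ IsFaceOf γ0 {x : Fin r → ℚ | ∀ i, 0 ≤ x i}) :
    (∃ x : Fin r → K, (∀ i, x i ≠ 0 ↔ Pi.single i (1 : ℚ) ∈ γ0) ∧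
        ∀ f ∈ a, MvPolynomial.eval x f = 0)
    ↔ (∏ i : Fin r, if Pi.single i (1 : ℚ) ∈ γ0 then MvPolynomial.X i else 1) ∉
        (a.map (MvPolynomial.aeval fun i : Fin r =>
          if Pi.single i (1 : ℚ) ∈ γ0 then MvPolynomial.X i
            else (0 : MvPolynomial (Fin r) K)).toRingHom).radical := by
  classical
  set P : Fin r → Prop := fun i => Pi.single i (1 : ℚ) ∈ γ0 with hP
  set φ := (MvPolynomial.aeval (R := K) fun i : Fin r =>
      if P i then MvPolynomial.X i else (0 : MvPolynomial (Fin r) K)).toRingHom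
  set b := a.map φ
  constructor
  · rintro ⟨x, hx, hv⟩ hm
    obtain ⟨n, hn⟩ := hm
    -- eval x kills b
    have hxφ : ∀ g ∈ b, MvPolynomial.eval x g = 0 := by
      intro g hg
      have hle : b ≤ RingHom.ker (MvPolynomial.eval x) := by
        rw [Ideal.map_le_iff_le_comap]
        intro f hf
        have : MvPolynomial.eval x (φ f) =
            MvPolynomial.eval (fun i => if P i then x i else 0) f :=
          gitfan_comp_aux P x f
        have hxx : (fun i => if P i then x i else 0) = x := by
          funext i
          by_cases h : P i
          · simp [h]
          · simp [h, not_not.mp ((hx i).not.mpr h)]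
        simpa [Ideal.mem_comap, RingHom.mem_ker, this, hxx] using hv f hf
      exact hle hg
    have h0 := hxφ _ hn
    rw [map_pow] at h0
    have hne : MvPolynomial.eval x
        (∏ i : Fin r, if P i then MvPolynomial.X i else 1) ≠ 0 := by
      rw [map_prod]
      apply Finset.prod_ne_zero_iff.mpr
      intro i _
      by_cases h : P i
      · rw [if_pos h]; simpa using (hx i).mpr h
      · rw [if_neg h]; simp
    exact hne (pow_eq_zero_iff (n := n) (by rintro rfl; simp at h0) |>.mp h0)
  · intro hm
    rw [← MvPolynomial.vanishingIdeal_zeroLocus_eq_radical (K := K),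
      MvPolynomial.mem_vanishingIdeal_iff] at hm
    push_neg at hm
    obtain ⟨x, hxb, hxm⟩ := hm
    rw [map_prod] at hxm
    have hxi : ∀ i, P i → x i ≠ 0 := by
      intro i hi
      have := Finset.prod_ne_zero_iff.mp hxm i (Finset.mem_univ i)
      rw [if_pos hi] at this
      simpa using this
    refine ⟨fun i => if P i then x i else 0, fun i => ?_, fun f hf => ?_⟩
    · show (if P i then x i else 0) ≠ 0 ↔ Pi.single i 1 ∈ γ0
      by_cases h : P i
      · rw [if_pos h]; exact iff_of_true (hxi i h) h
      · rw [if_neg h]; exact iff_of_false (by simp) h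
    · rw [← gitfan_comp_aux P x f]
      exact (MvPolynomial.mem_zeroLocus_iff.mp hxb) _ (Ideal.mem_map_of_mem φ hf)
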